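/- If x, y ∈ {0,1}^{n²/4} are interpreted as (n/2)×(n/2) binary matrices A', B', and A, B are the block matrices A = [[A', I],[0,0]], B = [[I, 0],[B', 0]], then ‖AB‖_∞ = 2 if there exists a coordinate at which both x and y equal 1, and ‖AB‖_∞ ≤ 1 otherwise. -/

import Mathlib

open Matrix

theorem stmt_5 (m : ℕ) (A' B' : Matrix (Fin m) (Fin m) ℤ)
    (hA : ∀ i j, A' i j = 0 ∨ A' i j = 1) (hB : ∀ i j, B' i j = 0 ∨ B' i j = 1) :
    (∀ C, C = (fromBlocks A' 1 0 0) * (fromBlocks 1 0 B' 0) →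
      ((∃ i j, A' i j = 1 ∧ B' i j = 1) →
        Finset.univ.sup (fun p : (Fin m ⊕ Fin m) × (Fin m ⊕ Fin m) =>
          (C p.1 p.2).natAbs) = 2) ∧
      (¬ (∃ i j, A' i j = 1 ∧ B' i j = 1) →
        Finset.univ.sup (fun p : (Fin m ⊕ Fin m) × (Fin m ⊕ Fin m) =>
          (C p.1 p.2).natAbs) ≤ 1)) := by
  intro C hC
  have hC' : C = fromBlocks (A' + B') 0 0 0 := by
    rw [hC]
    show (HMul.hMul (self := Matrix.instHMulOfFintypeOfMulOfAddCommMonoid) (fromBlocks A' 1 0 0) (fromBlocks 1 0 B' 0) : Matrix (Fin m ⊕ Fin m) (Fin m ⊕ Fin m) ℤ) = fromBlocks (A' + B') 0 0 0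
    rw [fromBlocks_multiply]
    simp
  subst hC'
  constructor
  · rintro ⟨i, j, hai, hbi⟩
    apply le_antisymm
    · apply Finset.sup_le
      rintro ⟨p1, p2⟩ -
      rcases p1 with i' | i' <;> rcases p2 with j' | j' <;>
        simp only [fromBlocks_apply₁₁, fromBlocks_apply₁₂, fromBlocks_apply₂₁,
          fromBlocks_apply₂₂, Matrix.add_apply, Matrix.zero_apply]
      · rcases hA i' j' with h1 | h1 <;> rcases hB i' j' with h2 | h2 <;>
          rw [h1, h2] <;> norm_num
      all_goals norm_num
    · have := Finset.le_sup (f := fun p : (Fin m ⊕ Fin m) × (Fin m ⊕ Fin m) =>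
        (fromBlocks (A' + B') 0 0 0 p.1 p.2).natAbs)
        (Finset.mem_univ (Sum.inl i, Sum.inl j))
      simpa [fromBlocks_apply₁₁, Matrix.add_apply, hai, hbi] using this
  · intro hne
    apply Finset.sup_le
    rintro ⟨p1, p2⟩ -
    rcases p1 with i' | i' <;> rcases p2 with j' | j' <;>
      simp only [fromBlocks_apply₁₁, fromBlocks_apply₁₂, fromBlocks_apply₂₁,
        fromBlocks_apply₂₂, Matrix.add_apply, Matrix.zero_apply]
    · rcases hA i' j' with h1 | h1 <;> rcases hB i' j' with h2 | h2
      · rw [h1, h2]; norm_num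
      · rw [h1, h2]; norm_num
      · rw [h1, h2]; norm_num
      · exact absurd ⟨i', j', h1, h2⟩ hne
    all_goals norm_num
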